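/- For any h ∈ ℝⁿ and densities ρ₁,…,ρₙ > 0, the determinant of −Γ·diag(h₁,…,hₙ) equals (−1)ⁿ · hₙ · ∏_{i=1}^{n−1} hᵢ(1 − γᵢ). Equivalently, f_n(0, 0, γ) = (−1)ⁿ hₙ ∏_{i=1}^{n−1} hᵢ(1−γᵢ), where f_n(λ,u,γ) := det((diag(u) − λIₙ)² − Γ·diag(h)). -/

import Mathlib

open Matrix

namespace MLSW9

noncomputable def alpha (n : ℕ) (ρ : Fin n → ℝ) (i k : Fin n) : ℝ :=
  if k < i then ρ k / ρ i else 1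

noncomputable def Gam (n : ℕ) (ρ : Fin n → ℝ) : Matrix (Fin n) (Fin n) ℝ :=
  Matrix.of (alpha n ρ)

/-- The density ratio `γᵢ = ρᵢ/ρᵢ₊₁`. -/
noncomputable def gam (n : ℕ) (ρ : Fin n → ℝ) (i : Fin (n - 1)) : ℝ :=
  ρ ⟨i.val, by have := i.isLt; omega⟩ / ρ ⟨i.val + 1, by have := i.isLt; omega⟩

/-- Successive differences of `ρ`. -/
noncomputable def Dd (m : ℕ) (ρ : Fin (m + 1) → ℝ) (j : Fin (m + 1)) : ℝ :=
  ρ j - if hj : j.val = 0 then 0 else ρ ⟨j.val - 1, by omega⟩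

noncomputable def Amat (m : ℕ) (ρ : Fin (m + 1) → ℝ) :
    Matrix (Fin (m + 1)) (Fin (m + 1)) ℝ :=
  Matrix.of fun i j => if j ≤ i then (ρ i)⁻¹ else 0

noncomputable def Bmat (m : ℕ) (ρ : Fin (m + 1) → ℝ) :
    Matrix (Fin (m + 1)) (Fin (m + 1)) ℝ :=
  Matrix.of fun j k => if j ≤ k then Dd m ρ j else 0

lemma sum_Dd (m : ℕ) (ρ : Fin (m + 1) → ℝ) (t : Fin (m + 1)) :
    ∑ j : Fin (m + 1), (if j ≤ t then Dd m ρ j else 0) = ρ t := by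
  induction t using Fin.induction with
  | zero =>
      rw [Finset.sum_eq_single 0]
      · simp [Dd]
      · intro j _ hj
        rw [if_neg]
        intro hle
        exact hj (le_antisymm hle (Fin.zero_le j))
      · simp
  | succ i ih =>
      have key : ∀ j : Fin (m + 1),
          (if j ≤ i.succ then Dd m ρ j else 0) =
            (if j ≤ i.castSucc then Dd m ρ j else 0) +
              (if j = i.succ then Dd m ρ j else 0) := by
        intro j
        have h1 : i.succ.val = i.val + 1 := rfl
        have h2 : (i.castSucc : Fin (m + 1)).val = i.val := rfl
        by_cases hc : j = i.succ
        · subst hc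
          rw [if_pos le_rfl, if_pos rfl, if_neg, zero_add]
          simp only [Fin.le_def, h1, h2]
          omega
        · have hiff : (j ≤ i.succ) ↔ (j ≤ i.castSucc) := by
            simp only [Fin.le_def, h1, h2]
            constructor
            · intro hle
              have : j.val ≠ i.val + 1 := fun hh => hc (Fin.ext (by rw [hh, h1]))
              omega
            · omega
          rw [if_neg hc, add_zero]
          exact if_congr hiff rfl rfl
      rw [Finset.sum_congr rfl (fun j _ => key j), Finset.sum_add_distrib, ih,
        Finset.sum_ite_eq' Finset.univ i.succ (Dd m ρ)]
      simp only [Finset.mem_univ, if_true]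
      have h3 : Dd m ρ i.succ = ρ i.succ - ρ i.castSucc := by
        have : i.succ.val = i.val + 1 := rfl
        rw [Dd, dif_neg (by omega)]
        congr 1
      rw [h3]; ring

lemma Gam_eq (m : ℕ) (ρ : Fin (m + 1) → ℝ) (hρ : ∀ i, 0 < ρ i) :
    Gam (m + 1) ρ = Amat m ρ * Bmat m ρ := by
  ext i k
  rw [Matrix.mul_apply]
  have key : ∀ j : Fin (m + 1),
      Amat m ρ i j * Bmat m ρ j k =
        (ρ i)⁻¹ * (if j ≤ min i k then Dd m ρ j else 0) := by
    intro j
    simp only [Amat, Bmat, Matrix.of_apply, le_min_iff]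
    split_ifs with a b c c <;> simp_all <;> ring
  rw [Finset.sum_congr rfl (fun j _ => key j), ← Finset.mul_sum,
    sum_Dd m ρ (min i k)]
  simp only [Gam, alpha, Matrix.of_apply]
  split_ifs with hik
  · rw [min_eq_right hik.le]; rw [div_eq_inv_mul]
  · rw [min_eq_left (not_lt.mp hik)]
    field_simp [(hρ i).ne']

/-- `det(−Γ·diag(h)) = (−1)ⁿ hₙ ∏_{i=1}^{n−1} hᵢ(1−γᵢ)`; equivalently
`f_n(0,0,γ)` equals the same quantity, where
`f_n(λ,u,γ) = det((diag(u) − λI)² − Γ diag(h))`. -/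
theorem stmt9 (n : ℕ) (hn : 2 ≤ n) (ρ : Fin n → ℝ) (hρ : ∀ i, 0 < ρ i)
    (h : Fin n → ℝ) :
    (-(Gam n ρ * Matrix.diagonal h)).det =
      (-1 : ℝ) ^ n * h ⟨n - 1, by omega⟩ *
        ∏ i : Fin (n - 1),
          (h ⟨i.val, by have := i.isLt; omega⟩ * (1 - gam n ρ i)) ∧
    ((Matrix.diagonal (fun _ : Fin n => (0 : ℝ)) - (0 : ℝ) • 1) ^ 2 -
        Gam n ρ * Matrix.diagonal h).det =
      (-1 : ℝ) ^ n * h ⟨n - 1, by omega⟩ *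
        ∏ i : Fin (n - 1),
          (h ⟨i.val, by have := i.isLt; omega⟩ * (1 - gam n ρ i)) := by
  obtain ⟨m, rfl⟩ : ∃ m, n = m + 1 := ⟨n - 1, by omega⟩
  have main :
      (-(Gam (m + 1) ρ * Matrix.diagonal h)).det =
        (-1 : ℝ) ^ (m + 1) * h ⟨m, by omega⟩ *
          ∏ i : Fin m,
            (h ⟨i.val, by have := i.isLt; omega⟩ * (1 - gam (m + 1) ρ i)) := by
    have detA : (Amat m ρ).det = ∏ i : Fin (m + 1), (ρ i)⁻¹ := by
      rw [Matrix.det_of_lowerTriangular]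
      · apply Finset.prod_congr rfl
        intro i _
        simp [Amat]
      · intro i j hij
        simp only [Amat, Matrix.of_apply]
        rw [if_neg (by exact fun hle => absurd hij (not_lt.mpr hle))]
    have detB : (Bmat m ρ).det = ∏ i : Fin (m + 1), Dd m ρ i := by
      rw [Matrix.det_of_upperTriangular]
      · apply Finset.prod_congr rfl
        intro i _
        simp [Bmat]
      · intro i j hij
        simp only [Bmat, Matrix.of_apply]
        rw [if_neg (by exact fun hle => absurd hij (not_lt.mpr hle))]
    have detGam : (Gam (m + 1) ρ).det = ∏ i : Fin m, (1 - gam (m + 1) ρ i) := by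
      rw [Gam_eq m ρ hρ, Matrix.det_mul, detA, detB, ← Finset.prod_mul_distrib]
      rw [Fin.prod_univ_succ]
      have h0 : (ρ 0)⁻¹ * Dd m ρ 0 = 1 := by
        simp only [Dd, Fin.val_zero, dif_pos rfl, sub_zero]
        field_simp [(hρ 0).ne']
        simp
      rw [h0, one_mul]
      apply Finset.prod_congr rfl
      intro i _
      have hs : (i.succ : Fin (m + 1)).val = i.val + 1 := rfl
      have hD : Dd m ρ i.succ = ρ ⟨i.val + 1, by omega⟩ - ρ ⟨i.val, by omega⟩ := by
        rw [Dd, dif_neg (by rw [hs]; omega)]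
        congr 1
      have hg : gam (m + 1) ρ i = ρ ⟨i.val, by omega⟩ / ρ ⟨i.val + 1, by omega⟩ := rfl
      have hsucc : ρ i.succ = ρ ⟨i.val + 1, by omega⟩ := by congr 1
      rw [hD, hg, hsucc]
      have := (hρ ⟨i.val + 1, by omega⟩).ne'
      field_simp
    rw [Matrix.det_neg, Matrix.det_mul, detGam, Matrix.det_diagonal]
    have hprod : ∏ i : Fin (m + 1), h i =
        h ⟨m, by omega⟩ * ∏ i : Fin m, h ⟨i.val, by omega⟩ := by
      rw [Fin.prod_univ_castSucc, mul_comm]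
      congr 1
    rw [hprod, Finset.prod_mul_distrib]
    simp only [Fintype.card_fin]
    ring
  refine ⟨main, ?_⟩
  have : ((Matrix.diagonal (fun _ : Fin (m + 1) => (0 : ℝ)) - (0 : ℝ) • 1) ^ 2 -
      Gam (m + 1) ρ * Matrix.diagonal h) = -(Gam (m + 1) ρ * Matrix.diagonal h) := by
    simp [Matrix.diagonal_zero]
  rw [this]
  exact main

end MLSW9
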